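/- arXiv:2507.10807 — 4 statements merged into one kernel-verified Lean document; each statement's English description precedes it below -/
import Mathlib

section
/- Let ω be a pure state on a unital C*-algebra A and let u be a unitary element of A such that ω(u* a u) = ω(a) for all a ∈ A. Then |ω(u)| = 1. -/
set_option linter.unusedSectionVars false

open scoped ComplexOrder
/-- A state on a unital C*-algebra: a linear functional that is positive and normalized. -/
def IsState {A : Type*} [NormedRing A] [StarRing A] [NormedAlgebra ℂ A]
    (ω : A →ₗ[ℂ] ℂ) : Prop :=
  ω 1 = 1 ∧ ∀ a : A, 0 ≤ ω (star a * a)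

/-- A pure state: an extreme point of the state space. -/
def IsPureState {A : Type*} [NormedRing A] [StarRing A] [NormedAlgebra ℂ A]
    (ω : A →ₗ[ℂ] ℂ) : Prop :=
  IsState ω ∧ ∀ φ ψ : A →ₗ[ℂ] ℂ, IsState φ → IsState ψ →
    ∀ t : ℝ, 0 < t → t < 1 → ω = (t : ℂ) • φ + ((1 - t : ℝ) : ℂ) • ψ → φ = ω

section Aux

variable {A : Type*} [NormedRing A] [StarRing A] [NormedAlgebra ℂ A] [StarModule ℂ A]

/-- For a state, the value on a selfadjoint element is real. -/
lemma isState_im_eq_zero (ω : A →ₗ[ℂ] ℂ) (hω : IsState ω) (s : A) (hs : star s = s) :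
    (ω s).im = 0 := by
  have h1 := hω.2 (1 + s)
  have h2 := hω.2 (1 - s)
  rw [star_add, star_one, hs] at h1
  rw [star_sub, star_one, hs] at h2
  have hkey : (1 + s) * (1 + s) = (1 - s) * (1 - s) + (s + s + s + s) := by noncomm_ring
  rw [hkey, map_add] at h1
  have i1 : (ω ((1 - s) * (1 - s))).im = 0 := (Complex.nonneg_iff.mp h2).2.symm
  have i2 : (ω ((1 - s) * (1 - s)) + ω (s + s + s + s)).im = 0 :=
    (Complex.nonneg_iff.mp h1).2.symm
  simp only [Complex.add_im, map_add] at i2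
  simp only [i1] at i2
  linarith

/-- A state is hermitian. -/
lemma isState_star_eq (ω : A →ₗ[ℂ] ℂ) (hω : IsState ω) (a : A) :
    ω (star a) = (starRingEnd ℂ) (ω a) := by
  set b := a + star a with hb
  set c := (-Complex.I) • (a - star a) with hc
  have hbs : star b = b := by simp [hb, star_add, add_comm]
  have hcs : star c = c := by
    simp only [hc, star_smul, star_sub, star_star]
    rw [show star (-Complex.I) = Complex.I by simp [Complex.star_def]]
    rw [show star a - a = -(a - star a) by abel]
    rw [smul_neg, ← neg_smul]
  have hib : (ω b).im = 0 := isState_im_eq_zero ω hω b hbs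
  have hic : (ω c).im = 0 := isState_im_eq_zero ω hω c hcs
  have hIc : Complex.I • c = a - star a := by
    rw [hc, smul_smul]
    rw [show Complex.I * -Complex.I = 1 by rw [mul_neg, Complex.I_mul_I, neg_neg]]
    rw [one_smul]
  have ha : a = (2⁻¹ : ℂ) • (b + Complex.I • c) := by
    rw [hIc, hb]
    rw [show a + star a + (a - star a) = (2:ℂ) • a by
      rw [show ((2:ℂ) • a) = a + a from two_smul ℂ a]; abel]
    rw [smul_smul]; norm_num
  have hsa : star a = (2⁻¹ : ℂ) • (b - Complex.I • c) := by
    rw [hIc, hb]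
    rw [show a + star a - (a - star a) = (2:ℂ) • star a by
      rw [show ((2:ℂ) • star a) = star a + star a from two_smul ℂ (star a)]; abel]
    rw [smul_smul]; norm_num
  have hcb : (starRingEnd ℂ) (ω b) = ω b := Complex.conj_eq_iff_im.mpr hib
  have hcc : (starRingEnd ℂ) (ω c) = ω c := Complex.conj_eq_iff_im.mpr hic
  rw [hsa]
  conv_rhs => rw [ha]
  simp only [map_smul, map_add, map_sub, smul_eq_mul, map_mul, map_inv₀, map_ofNat,
    Complex.conj_I, hcb, hcc]
  ring

/-- The conjugation linear map `a ↦ star x * a * x`. -/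
noncomputable def conjMap (x : A) : A →ₗ[ℂ] A :=
  (LinearMap.mulRight ℂ x).comp (LinearMap.mulLeft ℂ (star x))

@[simp] lemma conjMap_apply (x a : A) : conjMap x a = star x * a * x := rfl

/-- Key lemma: for a pure state invariant under conjugation by a unitary `u`,
if `-1 < Re ω(u) < 1` then `ω(u²) = 2 ω(u) Re ω(u) - 1`. -/
lemma key_lemma (ω : A →ₗ[ℂ] ℂ) (hω : IsPureState ω)
    (u : A) (hu1 : star u * u = 1)
    (hinv : ∀ a : A, ω (star u * a * u) = ω a)
    (h1 : -1 < (ω u).re) (h2 : (ω u).re < 1) :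
    ω (u * u) = 2 * ω u * ((ω u).re : ℂ) - 1 := by
  obtain ⟨⟨hω1, hωpos⟩, hpure⟩ := hω
  have hstar := isState_star_eq ω ⟨hω1, hωpos⟩
  set l : ℂ := ω u with hl
  have hac := Complex.add_conj l
  push_cast at hac
  set rp : ℝ := 2 + 2 * l.re with hrp
  set rm : ℝ := 2 - 2 * l.re with hrm
  have hrp0 : 0 < rp := by rw [hrp]; linarith
  have hrm0 : 0 < rm := by rw [hrm]; linarith
  have hrpne : ((rp : ℂ)) ≠ 0 := by exact_mod_cast hrp0.ne'
  have hrmne : ((rm : ℂ)) ≠ 0 := by exact_mod_cast hrm0.ne'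
  set φ : A →ₗ[ℂ] ℂ := ((rp : ℂ))⁻¹ • (ω ∘ₗ conjMap (1 + u)) with hφ
  set ψ : A →ₗ[ℂ] ℂ := ((rm : ℂ))⁻¹ • (ω ∘ₗ conjMap (1 - u)) with hψ
  have hφa : ∀ a, φ a = ((rp : ℂ))⁻¹ * ω (star (1 + u) * a * (1 + u)) := fun a => rfl
  have hψa : ∀ a, ψ a = ((rm : ℂ))⁻¹ * ω (star (1 - u) * a * (1 - u)) := fun a => rfl
  -- values at 1
  have hv1p : ω (star (1 + u) * 1 * (1 + u)) = (rp : ℂ) := by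
    have e : star (1 + u) * 1 * (1 + u) = 1 + u + (star u + star u * u) := by
      rw [star_add, star_one]; noncomm_ring
    rw [e, hu1]
    simp only [map_add, hω1, hstar u, ← hl]
    rw [hrp]
    push_cast
    linear_combination hac
  have hv1m : ω (star (1 - u) * 1 * (1 - u)) = (rm : ℂ) := by
    have e : star (1 - u) * 1 * (1 - u) = 1 - u - star u + star u * u := by
      rw [star_sub, star_one]; noncomm_ring
    rw [e, hu1]
    simp only [map_add, map_sub, hω1, hstar u, ← hl]
    rw [hrm]
    push_cast
    linear_combination -hac
  -- φ, ψ are states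
  have hφs : IsState φ := by
    constructor
    · rw [hφa 1, hv1p, inv_mul_cancel₀ hrpne]
    · intro a
      rw [hφa]
      have e : star (1 + u) * (star a * a) * (1 + u) = star (a * (1 + u)) * (a * (1 + u)) := by
        rw [star_mul]; noncomm_ring
      rw [e]
      refine mul_nonneg ?_ (hωpos _)
      rw [← Complex.ofReal_inv]
      exact_mod_cast (inv_nonneg.mpr hrp0.le)
  have hψs : IsState ψ := by
    constructor
    · rw [hψa 1, hv1m, inv_mul_cancel₀ hrmne]
    · intro a
      rw [hψa]
      have e : star (1 - u) * (star a * a) * (1 - u) = star (a * (1 - u)) * (a * (1 - u)) := by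
        rw [star_mul]; noncomm_ring
      rw [e]
      refine mul_nonneg ?_ (hωpos _)
      rw [← Complex.ofReal_inv]
      exact_mod_cast (inv_nonneg.mpr hrm0.le)
  -- convex combination
  set t : ℝ := rp / 4 with ht
  have ht0 : 0 < t := by rw [ht]; positivity
  have ht1 : t < 1 := by rw [ht, hrp]; linarith
  have h1t : ((1 - t : ℝ) : ℂ) = (rm : ℂ) / 4 := by
    rw [ht, hrp, hrm]; push_cast; ring
  have hconv : ω = (t : ℂ) • φ + ((1 - t : ℝ) : ℂ) • ψ := by
    apply LinearMap.ext
    intro a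
    simp only [LinearMap.add_apply, LinearMap.smul_apply, smul_eq_mul]
    rw [hφa, hψa, h1t]
    have htc : (t : ℂ) = (rp : ℂ) / 4 := by rw [ht]; push_cast; ring
    rw [htc]
    rw [show (rp:ℂ)/4 * ((rp:ℂ)⁻¹ * ω (star (1 + u) * a * (1 + u))) =
        ω (star (1 + u) * a * (1 + u)) / 4 by field_simp]
    rw [show (rm:ℂ)/4 * ((rm:ℂ)⁻¹ * ω (star (1 - u) * a * (1 - u))) =
        ω (star (1 - u) * a * (1 - u)) / 4 by field_simp]
    have e : star (1 + u) * a * (1 + u) + star (1 - u) * a * (1 - u)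
        = a + a + (star u * a * u + star u * a * u) := by
      rw [star_add, star_sub, star_one]; noncomm_ring
    have h4 := congrArg ω e
    simp only [map_add] at h4
    rw [hinv a] at h4
    have h4' : ω (star (1 + u) * a * (1 + u)) + ω (star (1 - u) * a * (1 - u)) = 4 * ω a := by
      rw [h4]; ring
    linear_combination -h4' / 4
  have hφω : φ = ω := hpure φ ψ hφs hψs t ht0 ht1 hconv
  -- evaluate at u
  have heval := LinearMap.congr_fun hφω u
  rw [hφa u] at heval
  have e : star (1 + u) * u * (1 + u) = 1 + u + u + u * u := by
    rw [star_add, star_one, add_mul, one_mul, hu1]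
    noncomm_ring
  rw [e] at heval
  simp only [map_add, hω1, ← hl] at heval
  have heq : 1 + l + l + ω (u * u) = (rp : ℂ) * l := by
    field_simp at heval
    linear_combination heval
  rw [hrp] at heq
  push_cast at heq
  linear_combination heq

end Aux

/-- If ω is a pure state on a unital C*-algebra and u is a unitary with
ω(u* a u) = ω(a) for all a, then |ω(u)| = 1. -/
theorem pure_state_unitary_invariant_abs_one
    {A : Type*} [NormedRing A] [StarRing A] [CStarRing A] [NormedAlgebra ℂ A]
    [CompleteSpace A] [StarModule ℂ A]
    (ω : A →ₗ[ℂ] ℂ) (hω : IsPureState ω)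
    (u : A) (hu : star u * u = 1 ∧ u * star u = 1)
    (hinv : ∀ a : A, ω (star u * a * u) = ω a) :
    ‖ω u‖ = 1 := by
  have hstar := isState_star_eq ω hω.1
  set l : ℂ := ω u with hl
  -- Cauchy-Schwarz: normSq l ≤ 1
  have h0 : ω (star (u - l • 1) * (u - l • 1)) = 1 - (Complex.normSq l : ℂ) := by
    have expand : star (u - l • 1) * (u - l • 1)
        = star u * u - l • star u - ((starRingEnd ℂ) l) • u
          + (l * (starRingEnd ℂ) l) • 1 := by
      rw [star_sub, star_smul, star_one, Complex.star_def]
      simp only [sub_mul, mul_sub, smul_mul_assoc, mul_smul_comm, one_mul, mul_one,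
        smul_smul]
      module
    rw [expand, map_add, map_sub, map_sub, map_smul, map_smul, map_smul, hu.1,
      hω.1.1, hstar u, ← hl]
    simp only [smul_eq_mul]
    rw [← Complex.mul_conj]
    ring
  have hcs : Complex.normSq l ≤ 1 := by
    have h := hω.1.2 (u - l • 1)
    rw [h0] at h
    have := (Complex.nonneg_iff.mp h).1
    simp only [Complex.sub_re, Complex.one_re, Complex.ofReal_re] at this
    linarith
  have hnsq : Complex.normSq l = l.re ^ 2 + l.im ^ 2 := by
    rw [Complex.normSq_apply]; ring
  suffices hs : Complex.normSq l = 1 by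
    rw [Complex.norm_def, hs, Real.sqrt_one]
  by_cases hre : l.re ≤ -1 ∨ 1 ≤ l.re
  · rcases hre with h | h <;>
      nlinarith [sq_nonneg l.im, sq_nonneg (l.re + 1), sq_nonneg (l.re - 1)]
  by_cases him : l.im ≤ -1 ∨ 1 ≤ l.im
  · rcases him with h | h <;>
      nlinarith [sq_nonneg l.re, sq_nonneg (l.im + 1), sq_nonneg (l.im - 1)]
  push_neg at hre him
  obtain ⟨hre1, hre2⟩ := hre
  obtain ⟨him1, him2⟩ := him
  have E1 := key_lemma ω hω u hu.1 hinv (by rw [← hl]; linarith) (by rw [← hl]; linarith)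
  rw [← hl] at E1
  -- second unitary v = I • u
  set v : A := Complex.I • u with hv
  have hv1 : star v * v = 1 := by
    rw [hv, star_smul, smul_mul_smul_comm, hu.1, Complex.star_def, Complex.conj_I,
      neg_mul, Complex.I_mul_I, neg_neg, one_smul]
  have hinvv : ∀ a : A, ω (star v * a * v) = ω a := by
    intro a
    have hrw : star v * a * v = star u * a * u := by
      rw [hv, star_smul, smul_mul_assoc, smul_mul_smul_comm, Complex.star_def,
        Complex.conj_I, neg_mul, Complex.I_mul_I, neg_neg, one_smul]
    rw [hrw]
    exact hinv a
  have hωv : ω v = Complex.I * l := by rw [hv, map_smul, smul_eq_mul, ← hl]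
  have hvre : (Complex.I * l).re = -l.im := by simp [Complex.mul_re]
  have E2 := key_lemma ω hω v hv1 hinvv
    (by rw [hωv, hvre]; linarith) (by rw [hωv, hvre]; linarith)
  rw [hωv, hvre] at E2
  have hvv : v * v = (-1 : ℂ) • (u * u) := by
    rw [hv, smul_mul_smul_comm, Complex.I_mul_I]
  rw [hvv, map_smul] at E2
  have E2' : -ω (u * u) = 2 * (Complex.I * l) * ((-l.im : ℝ) : ℂ) - 1 := by
    rw [← E2]; simp
  have hcomb : 2 * l * ((l.re : ℝ) : ℂ) - 2 * Complex.I * l * ((l.im : ℝ) : ℂ) = 2 := by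
    push_cast at E1 E2' ⊢
    linear_combination -E1 - E2'
  have hre' := congrArg Complex.re hcomb
  simp only [Complex.sub_re, Complex.mul_re, Complex.mul_im, Complex.ofReal_re,
    Complex.ofReal_im, Complex.I_re, Complex.I_im, Complex.re_ofNat, Complex.im_ofNat] at hre'
  rw [hnsq]
  nlinarith [hre']
end

section
/- Let A be a unital C*-algebra, δ a *-derivation with domain D(δ), and u, v ∈ D(δ) unitaries. Then vu ∈ D(δ) and (vu)* δ(vu) = u* v* δ(v) u + u* δ(u). Consequently, for states ω₁, ω₂, ω₃ with ω₂ = ω₁∘Ad_u, ω₃ = ω₂∘Ad_v (Ad_u(a) = u*au), the quantities N(ωᵢ,ωⱼ) := i·ωᵢ(w*δ(w)) satisfy additivity N(ω₁,ω₂) + N(ω₂,ω₃) = N(ω₁,ω₃). -/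
open scoped ComplexOrder

/-- Leibniz and cocycle identities for a *-derivation δ defined on a star-subalgebra
(its domain): for unitaries u, v in the domain, vu is in the domain,
(vu)*δ(vu) = u*v*δ(v)u + u*δ(u), and the index N(ωᵢ,ωⱼ) = i·ωᵢ(w*δ(w)) is additive:
N(ω₁,ω₂) + N(ω₂,ω₃) = N(ω₁,ω₃) for ω₂ = ω₁∘Ad_u, ω₃ = ω₂∘Ad_v. -/
theorem derivation_cocycle_additivity
    {A : Type*} [NormedRing A] [StarRing A] [CStarRing A] [NormedAlgebra ℂ A]
    [CompleteSpace A] [StarModule ℂ A]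
    (S : StarSubalgebra ℂ A) (δ : S →ₗ[ℂ] A)
    (hleibniz : ∀ x y : S, δ (x * y) = δ x * (y : A) + (x : A) * δ y)
    (hstar : ∀ x : S, δ (star x) = star (δ x))
    (u v : A) (hu : u ∈ S) (hv : v ∈ S)
    (huU : star u * u = 1 ∧ u * star u = 1)
    (hvU : star v * v = 1 ∧ v * star v = 1)
    (ω₁ ω₂ ω₃ : A →ₗ[ℂ] ℂ)
    (hω₁ : IsState ω₁) (hω₂ : IsState ω₂) (hω₃ : IsState ω₃)
    (hAd₂ : ∀ a : A, ω₂ a = ω₁ (star u * a * u))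
    (hAd₃ : ∀ a : A, ω₃ a = ω₂ (star v * a * v)) :
    v * u ∈ S ∧
      star (v * u) * δ ⟨v * u, mul_mem hv hu⟩ =
        star u * star v * δ ⟨v, hv⟩ * u + star u * δ ⟨u, hu⟩ ∧
      Complex.I * ω₁ (star u * δ ⟨u, hu⟩) + Complex.I * ω₂ (star v * δ ⟨v, hv⟩) =
        Complex.I * ω₁ (star (v * u) * δ ⟨v * u, mul_mem hv hu⟩) := by
  have hδvu : δ ⟨v * u, mul_mem hv hu⟩ = δ ⟨v, hv⟩ * u + v * δ ⟨u, hu⟩ := by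
    have := hleibniz ⟨v, hv⟩ ⟨u, hu⟩
    simpa using this
  have key : star (v * u) * δ ⟨v * u, mul_mem hv hu⟩ =
      star u * star v * δ ⟨v, hv⟩ * u + star u * δ ⟨u, hu⟩ := by
    rw [hδvu, star_mul]
    have h1 : star v * v = 1 := hvU.1
    calc star u * star v * (δ ⟨v, hv⟩ * u + v * δ ⟨u, hu⟩)
        = star u * star v * δ ⟨v, hv⟩ * u + star u * (star v * v) * δ ⟨u, hu⟩ := by
          noncomm_ring
      _ = star u * star v * δ ⟨v, hv⟩ * u + star u * δ ⟨u, hu⟩ := by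
          rw [h1, mul_one]
  refine ⟨mul_mem hv hu, key, ?_⟩
  rw [key, map_add, mul_add, add_comm]
  congr 1
  rw [hAd₂]
  congr 1
  noncomm_ring
end

section
/- Let A be a unital C*-algebra, δ a *-derivation, ω a state with ω∘δ = 0 on D(δ), and u ∈ D(δ) unitary with ω∘Ad_u = ω and |ω(u)| = 1. Then ω(u* δ(u)) = 0. -/
open scoped ComplexOrder

section helpers
variable {A : Type*} [NormedRing A] [StarRing A] [NormedAlgebra ℂ A] [StarModule ℂ A]
  (ω : A →ₗ[ℂ] ℂ)

lemma expand_aux (g b : A) (t : ℂ) :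
    ω (star (t • g + b) * (t • g + b)) =
      (star t * t) * ω (star g * g) + star t * ω (star g * b)
        + t * ω (star b * g) + ω (star b * b) := by
  have : star (t • g + b) * (t • g + b) =
      (star t * t) • (star g * g) + star t • (star g * b)
        + t • (star b * g) + star b * b := by
    simp only [star_add, star_smul, add_mul, mul_add, smul_mul_assoc, mul_smul_comm, smul_smul]
    module
  rw [this]
  simp [smul_eq_mul, mul_assoc]

set_option linter.unusedSectionVars false in
lemma state_pos_re_im (hω : IsState ω) (a : A) :
    0 ≤ (ω (star a * a)).re ∧ (ω (star a * a)).im = 0 := by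
  have := hω.2 a
  rw [Complex.le_def] at this
  simpa using ⟨this.1, this.2.symm⟩

/-- Hermitian symmetry of the GNS form. -/
lemma state_herm (hω : IsState ω) (g b : A) :
    ω (star b * g) = star (ω (star g * b)) := by
  set x := ω (star g * b) with hx
  set y := ω (star b * g) with hy
  have him : ∀ t : ℂ, (star t * t * ω (star g * g)).im = 0 →
      (star t * x).im + (t * y).im = 0 := by
    intro t ht
    have h := (state_pos_re_im ω hω (t • g + b)).2
    rw [expand_aux] at h
    have hb := (state_pos_re_im ω hω b).2
    simp only [Complex.add_im, hb, add_zero, ← hx, ← hy, ht] at h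
    linarith [h]
  have hg := (state_pos_re_im ω hω g).2
  have h1 : x.im + y.im = 0 := by
    have := him 1 (by simp [hg])
    simpa using this
  have h2 : y.re - x.re = 0 := by
    have h0 : (star Complex.I * Complex.I * ω (star g * g)).im = 0 := by
      simp [Complex.star_def, hg]
    have := him Complex.I h0
    simp [Complex.star_def, Complex.mul_im] at this
    linarith [this]
  apply Complex.ext
  · simp only [RCLike.star_def, Complex.conj_re]; linarith
  · simp only [RCLike.star_def, Complex.conj_im]; linarith

/-- Cauchy–Schwarz degenerate case. -/
lemma state_cs_zero (hω : IsState ω) (g b : A) (hg : ω (star g * g) = 0) :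
    ω (star g * b) = 0 := by
  set x := ω (star g * b) with hx
  have hyx : ω (star b * g) = star x := state_herm ω hω g b
  have H : ∀ t : ℂ, 0 ≤ star t * x + t * star x + ω (star b * b) := by
    intro t
    have := hω.2 (t • g + b)
    rw [expand_aux ω g b t, hg, hyx, ← hx] at this
    convert this using 1
    ring
  have hc := state_pos_re_im ω hω b
  have key : ∀ s : ℝ, 0 ≤ 2 * s * x.re + (ω (star b * b)).re ∧
      0 ≤ 2 * s * x.im + (ω (star b * b)).re := by
    intro s
    constructor
    · have := H (s : ℂ)
      rw [Complex.le_def] at this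
      have h1 := this.1
      have hcomp : (star (s : ℂ) * x + (s : ℂ) * star x + ω (star b * b)).re =
          2 * s * x.re + (ω (star b * b)).re := by
        simp [Complex.star_def, Complex.add_re, Complex.mul_re, Complex.conj_re,
          Complex.conj_im]
        ring
      rw [hcomp] at h1
      simpa using h1
    · have := H ((s : ℂ) * Complex.I)
      rw [Complex.le_def] at this
      have h1 := this.1
      have hcomp : (star ((s : ℂ) * Complex.I) * x + (s : ℂ) * Complex.I * star x
            + ω (star b * b)).re = 2 * s * x.im + (ω (star b * b)).re := by
        simp [Complex.star_def, Complex.add_re, Complex.mul_re, Complex.mul_im,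
          Complex.conj_re, Complex.conj_im]
        ring
      rw [hcomp] at h1
      simpa using h1
  have hre : x.re = 0 := by
    by_contra hne
    set s : ℝ := -((ω (star b * b)).re + 1) / (2 * x.re) with hs
    have h1 := (key s).1
    have heq : 2 * s * x.re = -((ω (star b * b)).re + 1) := by
      rw [hs]; field_simp
    linarith [h1, heq]
  have him : x.im = 0 := by
    by_contra hne
    set s : ℝ := -((ω (star b * b)).re + 1) / (2 * x.im) with hs
    have h1 := (key s).2
    have heq : 2 * s * x.im = -((ω (star b * b)).re + 1) := by
      rw [hs]; field_simp
    linarith [h1, heq]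
  exact Complex.ext hre him

end helpers

/-- If δ is a *-derivation on a unital C*-algebra, ω a δ-invariant state, and u a unitary
in the domain of δ with ω∘Ad_u = ω and |ω(u)| = 1, then ω(u*δ(u)) = 0. -/
theorem invariant_state_derivation_vanishes
    {A : Type*} [NormedRing A] [StarRing A] [CStarRing A] [NormedAlgebra ℂ A]
    [CompleteSpace A] [StarModule ℂ A]
    (S : StarSubalgebra ℂ A) (δ : S →ₗ[ℂ] A)
    (hleibniz : ∀ x y : S, δ (x * y) = δ x * (y : A) + (x : A) * δ y)
    (hstar : ∀ x : S, δ (star x) = star (δ x))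
    (ω : A →ₗ[ℂ] ℂ) (hω : IsState ω)
    (hδinv : ∀ x : S, ω (δ x) = 0)
    (u : A) (hu : u ∈ S)
    (huU : star u * u = 1 ∧ u * star u = 1)
    (hAd : ∀ a : A, ω (star u * a * u) = ω a)
    (habs : ‖ω u‖ = 1) :
    ω (star u * δ ⟨u, hu⟩) = 0 := by
  set lam := ω u with hlam
  have hstaru : ω (star u) = star lam := by
    have := state_herm ω hω 1 u
    simpa [hlam] using this
  have hmod : star lam * lam = 1 := by
    have h : (starRingEnd ℂ) lam * lam = 1 := by
      rw [← Complex.normSq_eq_conj_mul_self]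
      norm_cast
      rw [← Complex.sq_norm, habs]; norm_num
    exact h
  set g : A := u - lam • 1 with hg
  have hgg : ω (star g * g) = 0 := by
    have hexp : star g * g = star u * u - lam • star u - star lam • u
        + (star lam * lam) • (1 : A) := by
      simp only [hg, star_sub, star_smul, star_one, sub_mul, mul_sub, smul_mul_assoc,
        mul_smul_comm, smul_smul, mul_one, one_mul]
      module
    rw [hexp]
    simp only [map_add, map_sub, map_smul, smul_eq_mul, huU.1, hω.1, hstaru, ← hlam, mul_one]
    linear_combination -hmod
  have hcs := state_cs_zero ω hω g (δ ⟨u, hu⟩) hgg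
  have hδu := hδinv ⟨u, hu⟩
  have hsu : star u = star g + star lam • (1 : A) := by
    simp [hg, star_sub, star_smul]
  rw [hsu, add_mul, map_add, hcs, smul_mul_assoc, one_mul, map_smul, smul_eq_mul, hδu,
    mul_zero, zero_add]
end

section
/- Let V be a unitary on a Hilbert space H with V − 1 of finite rank. Then the implementer Γ(V) = 1 + Σ_{n≥1} (1/n!) dΓ(V−1, …, V−1) in the CAR algebra over H is a finite sum (terms with n > rank(V−1) vanish), and ‖dΓ(A₁,…,A_n)‖ ≤ ∏ᵢ ‖Aᵢ‖₁ for trace-class Aᵢ, so that ‖Γ(V)‖ ≤ exp(‖V−1‖₁). -/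
open scoped InnerProductSpace

section ListAux
variable {A : Type*} [Ring A] [Algebra ℂ A]

lemma sq_zero_of_anticomm_self {x : A} (h : x * x = -(x * x)) : x * x = 0 := by
  have h2 : (2:ℂ) • (x * x) = 0 := by
    rw [two_smul]
    rw [eq_neg_iff_add_eq_zero] at h
    exact h
  have := congrArg (fun y => ((2:ℂ))⁻¹ • y) h2
  simpa [smul_smul] using this

lemma mul_list_prod_anticomm (x : A) : ∀ l : List A, (∀ y ∈ l, x * y = -(y * x)) →
    x * l.prod = ((-1:ℂ) ^ l.length) • (l.prod * x) := by
  intro l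
  induction l with
  | nil => simp
  | cons a t ih =>
    intro h
    have ha := h a (List.mem_cons_self)
    have ht := ih (fun y hy => h y (List.mem_cons_of_mem a hy))
    calc x * (a :: t).prod = (x * a) * t.prod := by rw [List.prod_cons, mul_assoc]
      _ = -((a * x) * t.prod) := by rw [ha, neg_mul]
      _ = -(a * (x * t.prod)) := by rw [mul_assoc]
      _ = -(a * (((-1:ℂ) ^ t.length) • (t.prod * x))) := by rw [ht]
      _ = ((-1:ℂ) ^ (a :: t).length) • ((a :: t).prod * x) := by
          rw [mul_smul_comm]
          rw [← neg_smul]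
          simp [List.prod_cons, mul_assoc, pow_succ, mul_comm]

lemma list_prod_eq_zero_of_dup : ∀ l : List A,
    (∀ p ∈ l, ∀ q ∈ l, p * q = -(q * p)) → ¬ l.Nodup → l.prod = 0 := by
  intro l
  induction l with
  | nil => intro _ h; exact absurd List.nodup_nil h
  | cons a t ih =>
    intro hanti hnd
    by_cases hmem : a ∈ t
    · obtain ⟨s1, s2, rfl⟩ := List.append_of_mem hmem
      have haa : a * a = 0 := sq_zero_of_anticomm_self
        (hanti a (List.mem_cons_self) a (List.mem_cons_self))
      have hx : a * s1.prod = ((-1:ℂ) ^ s1.length) • (s1.prod * a) :=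
        mul_list_prod_anticomm a s1 (fun y hy => hanti a (List.mem_cons_self) y
          (List.mem_cons_of_mem a (List.mem_append_left _ hy)))
      have hsplit : (a :: (s1 ++ a :: s2)).prod = a * s1.prod * (a * s2.prod) := by
        simp [List.prod_cons, List.prod_append, mul_assoc]
      rw [hsplit, hx, smul_mul_assoc]
      have : s1.prod * a * (a * s2.prod) = s1.prod * (a * a) * s2.prod := by
        rw [mul_assoc, mul_assoc, ← mul_assoc a a]
      rw [this, haa, mul_zero, zero_mul, smul_zero]
    · have hnd' : ¬ t.Nodup := by
        intro h; exact hnd (List.nodup_cons.mpr ⟨hmem, h⟩)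
      rw [List.prod_cons, ih (fun p hp q hq => hanti p (List.mem_cons_of_mem a hp)
        q (List.mem_cons_of_mem a hq)) hnd', mul_zero]

lemma ofFn_prod_eq_zero {n : ℕ} (c : Fin n → A)
    (hanti : ∀ i j, c i * c j = -(c j * c i)) {i j : Fin n} (hij : i ≠ j)
    (hc : c i = c j) : (List.ofFn c).prod = 0 := by
  apply list_prod_eq_zero_of_dup
  · intro p hp q hq
    obtain ⟨ip, rfl⟩ := List.mem_ofFn.mp hp
    obtain ⟨iq, rfl⟩ := List.mem_ofFn.mp hq
    exact hanti ip iq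
  · intro hnd
    rw [List.ofFn_eq_map] at hnd
    exact hij (List.inj_on_of_nodup_map hnd (List.mem_finRange i) (List.mem_finRange j) hc)
end ListAux

lemma svd_full {H : Type*} [NormedAddCommGroup H] [InnerProductSpace ℂ H] [CompleteSpace H]
    (T : H →L[ℂ] H) (hfin : FiniteDimensional ℂ ↥(LinearMap.range (T : H →ₗ[ℂ] H))) :
    ∃ (m : ℕ) (s : Fin m → ℝ) (u v : Fin m → H),
      Orthonormal ℂ u ∧ Orthonormal ℂ v ∧ (∀ j, 0 < s j) ∧
      (∀ x, T x = ∑ j, (s j : ℂ) • (⟪v j, x⟫_ℂ • u j)) ∧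
      m ≤ Module.finrank ℂ ↥(LinearMap.range (T : H →ₗ[ℂ] H)) := by
  classical
  set W : Submodule ℂ H := LinearMap.range (T : H →ₗ[ℂ] H) with hW
  set N : Submodule ℂ H := LinearMap.ker (T : H →ₗ[ℂ] H) with hN
  haveI hNc : CompleteSpace N := (ContinuousLinearMap.isClosed_ker T).completeSpace_coe
  set K : Submodule ℂ H := Nᗮ with hK
  have hmap : ∀ x ∈ K, T x ∈ W := fun x _ => LinearMap.mem_range_self _ x
  let Tk : K →ₗ[ℂ] W := ((T : H →ₗ[ℂ] H)).restrict hmap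
  have hTk : ∀ x : K, ((Tk x : W) : H) = T (x : H) := fun x => rfl
  have hker : ∀ z : K, Tk z = 0 → z = 0 := by
    intro z hz
    have hz' : T (z : H) = 0 := by rw [← hTk]; exact congrArg Subtype.val hz
    have hmemN : (z : H) ∈ N := by rwa [hN, LinearMap.mem_ker]
    have h0 : ⟪(z : H), (z : H)⟫_ℂ = 0 := z.2 (z : H) hmemN
    exact Subtype.ext (inner_self_eq_zero.mp h0)
  have hinj : Function.Injective Tk := by
    intro a b hab
    have : Tk (a - b) = 0 := by rw [map_sub, hab, sub_self]
    have := hker _ this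
    rwa [sub_eq_zero] at this
  haveI hKfin : FiniteDimensional ℂ K := FiniteDimensional.of_injective Tk hinj
  let B : K →ₗ[ℂ] K := (LinearMap.adjoint Tk) ∘ₗ Tk
  have hsym : B.IsSymmetric := by
    intro x y
    simp only [B, LinearMap.comp_apply, LinearMap.adjoint_inner_left,
      LinearMap.adjoint_inner_right]
  set m := Module.finrank ℂ K with hm
  let e := hsym.eigenvectorBasis rfl
  let lam := hsym.eigenvalues rfl
  have heig : ∀ j, B (e j) = (lam j : ℂ) • e j := hsym.apply_eigenvectorBasis rfl
  let v : Fin m → H := fun j => (e j : H)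
  have hv : Orthonormal ℂ v := by
    rw [orthonormal_iff_ite]
    intro i j
    have := orthonormal_iff_ite.mp e.orthonormal i j
    rwa [Submodule.coe_inner] at this
  have hTvv : ∀ j k, ⟪T (v j), T (v k)⟫_ℂ = if j = k then ((lam j : ℂ)) else 0 := by
    intro j k
    have h1 : ⟪T (v j), T (v k)⟫_ℂ = ⟪Tk (e j), Tk (e k)⟫_ℂ := by
      rw [Submodule.coe_inner, hTk, hTk]
    rw [h1, ← LinearMap.adjoint_inner_right]
    have : (LinearMap.adjoint Tk) (Tk (e k)) = B (e k) := rfl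
    rw [this, heig k, inner_smul_right, orthonormal_iff_ite.mp e.orthonormal j k]
    by_cases h : j = k
    · subst h; simp
    · simp [h]
  have hlam : ∀ j, (lam j : ℝ) = ‖T (v j)‖ ^ 2 := by
    intro j
    have := hTvv j j
    rw [if_pos rfl, inner_self_eq_norm_sq_to_K] at this
    simpa [← Complex.ofReal_pow] using congrArg Complex.re this.symm
  have hTv0 : ∀ j, T (v j) ≠ 0 := by
    intro j h
    have h1 : Tk (e j) = 0 := by
      apply Subtype.ext; rw [hTk]; exact h
    have h2 : e j = 0 := by
      apply hker _ h1
    exact e.orthonormal.ne_zero j h2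
  set s : Fin m → ℝ := fun j => ‖T (v j)‖ with hsdef
  have hs : ∀ j, 0 < s j := fun j => norm_pos_iff.mpr (hTv0 j)
  have hsne : ∀ j, (s j : ℂ) ≠ 0 := fun j => by
    exact_mod_cast Complex.ofReal_ne_zero.mpr (ne_of_gt (hs j))
  let u : Fin m → H := fun j => ((s j : ℂ))⁻¹ • T (v j)
  have hsu : ∀ j, (s j : ℂ) • u j = T (v j) := fun j => smul_inv_smul₀ (hsne j) _
  have hu : Orthonormal ℂ u := by
    rw [orthonormal_iff_ite]
    intro j k
    simp only [u, inner_smul_left, inner_smul_right, map_inv₀, Complex.conj_ofReal]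
    rw [hTvv j k]
    by_cases h : j = k
    · subst h
      rw [if_pos rfl, if_pos rfl]
      have hc : ((lam j : ℝ) : ℂ) = ((s j : ℂ))^2 := by
        rw [hlam j]; push_cast; rfl
      rw [hc, sq]
      rw [show (s j : ℂ)⁻¹ * ((s j : ℂ)⁻¹ * ((s j:ℂ) * (s j:ℂ))) =
        ((s j:ℂ) * (s j:ℂ)) / ((s j:ℂ) * (s j:ℂ)) by ring]
      exact div_self (mul_ne_zero (hsne j) (hsne j))
    · simp [h]
  haveI : CompleteSpace K := FiniteDimensional.complete ℂ K
  have hNK : Kᗮ = N := Submodule.orthogonal_orthogonal N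
  have hdec : ∀ x, T x = ∑ j, (s j : ℂ) • (⟪v j, x⟫_ℂ • u j) := by
    intro x
    set p : H := (K.orthogonalProjectionOnto x : H) with hp
    have hxp : x - p ∈ Kᗮ := Submodule.sub_starProjection_mem_orthogonal (K := K) x
    have h1 : T x = T p := by
      have hmem : x - p ∈ N := hNK ▸ hxp
      have : T (x - p) = 0 := hmem
      rw [map_sub, sub_eq_zero] at this
      exact this
    have h3 : ∀ j, ⟪v j, x⟫_ℂ = ⟪e j, K.orthogonalProjectionOnto x⟫_ℂ := by
      intro j
      have h0 : ⟪v j, x - p⟫_ℂ = 0 :=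
        Submodule.inner_right_of_mem_orthogonal (e j).2 hxp
      rw [inner_sub_right] at h0
      have h4 : ⟪v j, x⟫_ℂ = ⟪v j, p⟫_ℂ := sub_eq_zero.mp h0
      rw [h4]
      exact (Submodule.coe_inner K (e j) (K.orthogonalProjectionOnto x)).symm
    have hrepr : (K.orthogonalProjectionOnto x : K) =
        ∑ j, ⟪e j, K.orthogonalProjectionOnto x⟫_ℂ • e j := by
      conv_lhs => rw [← e.sum_repr ((K.orthogonalProjectionOnto x : K))]
      refine Finset.sum_congr rfl fun j _ => ?_
      rw [e.repr_apply_apply]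
    have hpsum : p = ∑ j, ⟪e j, K.orthogonalProjectionOnto x⟫_ℂ • v j := by
      rw [hp]
      conv_lhs => rw [hrepr]
      push_cast
      rfl
    calc T x = T p := h1
      _ = ∑ j, ⟪e j, K.orthogonalProjectionOnto x⟫_ℂ • T (v j) := by
          rw [hpsum, map_sum]
          simp
      _ = ∑ j, (s j : ℂ) • (⟪v j, x⟫_ℂ • u j) := by
          refine Finset.sum_congr rfl fun j _ => ?_
          rw [← h3 j, ← hsu j, smul_comm]
  refine ⟨m, s, u, v, hu, hv, hs, hdec, ?_⟩
  exact LinearMap.finrank_le_finrank_of_injective hinj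

noncomputable def traceNorm {H : Type*} [NormedAddCommGroup H] [InnerProductSpace ℂ H]
    (T : H →L[ℂ] H) : ℝ :=
  sSup {r : ℝ | ∃ (n : ℕ) (e f : Fin n → H), Orthonormal ℂ e ∧ Orthonormal ℂ f ∧
    r = ‖∑ i, ⟪e i, T (f i)⟫_ℂ‖}

lemma traceNorm_bounds {H : Type*} [NormedAddCommGroup H] [InnerProductSpace ℂ H]
    (T : H →L[ℂ] H) {m : ℕ} {s : Fin m → ℝ} {u v : Fin m → H}
    (hu : Orthonormal ℂ u) (hv : Orthonormal ℂ v) (hs : ∀ j, 0 ≤ s j)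
    (hdec : ∀ x, T x = ∑ j, (s j : ℂ) • (⟪v j, x⟫_ℂ • u j)) :
    (∑ j, s j) ≤ traceNorm T ∧ 0 ≤ traceNorm T := by
  set S := {r : ℝ | ∃ (n : ℕ) (e f : Fin n → H), Orthonormal ℂ e ∧ Orthonormal ℂ f ∧
    r = ‖∑ i, ⟪e i, T (f i)⟫_ℂ‖} with hS
  have hterm : ∀ (q : ℕ) (E F : Fin q → H) (i : Fin q),
      ⟪E i, T (F i)⟫_ℂ = ∑ j, (s j : ℂ) * (⟪v j, F i⟫_ℂ * ⟪E i, u j⟫_ℂ) := by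
    intro q E F i
    rw [hdec (F i), inner_sum]
    refine Finset.sum_congr rfl fun j _ => ?_
    rw [inner_smul_right, inner_smul_right]
  have hbdd : BddAbove S := by
    refine ⟨∑ j, s j, ?_⟩
    rintro r ⟨q, E, F, hE, hF, rfl⟩
    have h1 : ∑ i, ⟪E i, T (F i)⟫_ℂ =
        ∑ j, (s j : ℂ) * ∑ i, ⟪v j, F i⟫_ℂ * ⟪E i, u j⟫_ℂ := by
      rw [Finset.sum_congr rfl (fun i _ => hterm q E F i), Finset.sum_comm]
      simp [Finset.mul_sum]
    have hCS : ∀ j, ‖∑ i, ⟪v j, F i⟫_ℂ * ⟪E i, u j⟫_ℂ‖ ≤ 1 := by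
      intro j
      set a : EuclideanSpace ℂ (Fin q) := WithLp.toLp 2 (fun i => ⟪F i, v j⟫_ℂ) with hadef
      set b : EuclideanSpace ℂ (Fin q) := WithLp.toLp 2 (fun i => ⟪E i, u j⟫_ℂ) with hbdef
      have hab : ⟪a, b⟫_ℂ = ∑ i, ⟪v j, F i⟫_ℂ * ⟪E i, u j⟫_ℂ := by
        rw [PiLp.inner_apply]
        refine Finset.sum_congr rfl fun i _ => ?_
        simp [a, b, inner_conj_symm, mul_comm]
      have ha : ‖a‖ ≤ 1 := by
        rw [EuclideanSpace.norm_eq]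
        refine Real.sqrt_le_one.mpr ?_
        calc ∑ i, ‖a i‖ ^ 2 ≤ ‖v j‖ ^ 2 :=
              Orthonormal.sum_inner_products_le (v j) hF
          _ = 1 := by rw [hv.1 j]; norm_num
      have hb : ‖b‖ ≤ 1 := by
        rw [EuclideanSpace.norm_eq]
        refine Real.sqrt_le_one.mpr ?_
        calc ∑ i, ‖b i‖ ^ 2 ≤ ‖u j‖ ^ 2 :=
              Orthonormal.sum_inner_products_le (u j) hE
          _ = 1 := by rw [hu.1 j]; norm_num
      calc ‖∑ i, ⟪v j, F i⟫_ℂ * ⟪E i, u j⟫_ℂ‖ = ‖⟪a, b⟫_ℂ‖ := by rw [hab]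
        _ ≤ ‖a‖ * ‖b‖ := norm_inner_le_norm a b
        _ ≤ 1 * 1 := mul_le_mul ha hb (norm_nonneg b) zero_le_one
        _ = 1 := one_mul 1
    calc ‖∑ i, ⟪E i, T (F i)⟫_ℂ‖
        = ‖∑ j, (s j : ℂ) * ∑ i, ⟪v j, F i⟫_ℂ * ⟪E i, u j⟫_ℂ‖ := by rw [h1]
      _ ≤ ∑ j, ‖(s j : ℂ) * ∑ i, ⟪v j, F i⟫_ℂ * ⟪E i, u j⟫_ℂ‖ :=
          norm_sum_le _ _
      _ ≤ ∑ j, s j := by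
          refine Finset.sum_le_sum fun j _ => ?_
          rw [norm_mul, Complex.norm_real, Real.norm_of_nonneg (hs j)]
          calc s j * ‖∑ i, ⟪v j, F i⟫_ℂ * ⟪E i, u j⟫_ℂ‖ ≤ s j * 1 :=
                mul_le_mul_of_nonneg_left (hCS j) (hs j)
            _ = s j := mul_one _
  have hmem : (∑ j, s j) ∈ S := by
    refine ⟨m, u, v, hu, hv, ?_⟩
    have h2 : ∀ i : Fin m, ⟪u i, T (v i)⟫_ℂ = (s i : ℂ) := by
      intro i
      rw [hterm m u v i]
      rw [Finset.sum_eq_single i]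
      · rw [orthonormal_iff_ite.mp hv i i, orthonormal_iff_ite.mp hu i i]
        simp
      · intro j _ hj
        rw [orthonormal_iff_ite.mp hv j i, if_neg hj]
        simp
      · intro h; exact absurd (Finset.mem_univ i) h
    rw [Finset.sum_congr rfl (fun i _ => h2 i)]
    rw [show ∑ i : Fin m, (s i : ℂ) = ((∑ i, s i : ℝ) : ℂ) by push_cast; rfl]
    rw [Complex.norm_real, Real.norm_of_nonneg (Finset.sum_nonneg fun j _ => hs j)]
  have hmem0 : (0 : ℝ) ∈ S := by
    refine ⟨0, (fun i => i.elim0), (fun i => i.elim0),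
      orthonormal_iff_ite.mpr (fun i => i.elim0),
      orthonormal_iff_ite.mpr (fun i => i.elim0), ?_⟩
    simp
  exact ⟨le_csSup hbdd hmem, le_csSup hbdd hmem0⟩

/-- For a unitary V with V − 1 of finite rank r, the CAR implementer
Γ(V) = 1 + Σₙ (1/n!)dΓ(V−1,…,V−1) is a finite sum (terms with n > r vanish), the
multilinear maps dΓ satisfy ‖dΓ(A₁,…,Aₙ)‖ ≤ ∏ᵢ‖Aᵢ‖₁, and ‖Γ(V)‖ ≤ exp(‖V−1‖₁). -/
theorem car_implementer_bounds
    {H A : Type*} [NormedAddCommGroup H] [InnerProductSpace ℂ H] [CompleteSpace H]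
    [NormedRing A] [StarRing A] [CStarRing A] [NormedAlgebra ℂ A]
    [CompleteSpace A] [StarModule ℂ A]
    (ann : H → A)
    (hanti : ∀ f g : H, ann f * ann g = -(ann g * ann f))
    (hccr : ∀ f g : H, ann f * star (ann g) + star (ann g) * ann f = (⟪g, f⟫_ℂ) • 1)
    (hnorm : ∀ f : H, ‖ann f‖ = ‖f‖)
    (dΓ : ∀ n : ℕ, (Fin n → (H →L[ℂ] H)) → A)
    (hrank1 : ∀ (n : ℕ) (f g : Fin n → H),
      dΓ n (fun i => (innerSL ℂ (g i)).smulRight (f i)) =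
        (List.ofFn (fun i : Fin n => star (ann (f i.rev)))).prod *
          (List.ofFn (fun i : Fin n => ann (g i))).prod)
    (hadd : ∀ (n : ℕ) (T : Fin n → (H →L[ℂ] H)) (i : Fin n) (S : H →L[ℂ] H),
      dΓ n (Function.update T i (S + T i)) = dΓ n (Function.update T i S) + dΓ n T)
    (hsmul : ∀ (n : ℕ) (T : Fin n → (H →L[ℂ] H)) (i : Fin n) (c : ℂ),
      dΓ n (Function.update T i (c • T i)) = c • dΓ n T)
    (V : H →L[ℂ] H) (hV : star V * V = 1 ∧ V * star V = 1)
    (r : ℕ) (hfin : FiniteDimensional ℂ ↥(LinearMap.range ((V - 1 : H →L[ℂ] H) : H →ₗ[ℂ] H)))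
    (hr : Module.finrank ℂ ↥(LinearMap.range ((V - 1 : H →L[ℂ] H) : H →ₗ[ℂ] H)) = r) :
    (∀ n : ℕ, r < n → dΓ n (fun _ => V - 1) = 0) ∧
      (∀ (n : ℕ) (T : Fin n → (H →L[ℂ] H)),
        (∀ i, FiniteDimensional ℂ ↥(LinearMap.range ((T i : H →L[ℂ] H) : H →ₗ[ℂ] H))) →
          ‖dΓ n T‖ ≤ ∏ i, traceNorm (T i)) ∧
      ‖(1 : A) + ∑ n ∈ Finset.Icc 1 r, ((Nat.factorial n : ℂ)⁻¹) • dΓ n (fun _ => V - 1)‖ ≤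
        Real.exp (traceNorm (V - 1)) := by
  classical
  have hstaranti : ∀ f g : H, star (ann f) * star (ann g) = -(star (ann g) * star (ann f)) := by
    intro f g
    have h := congrArg star (hanti g f)
    simpa [star_mul] using h
  have hone : ‖(1:A)‖ ≤ 1 := by
    have h1 : ‖(1:A)‖ * ‖(1:A)‖ = ‖(1:A)‖ := by
      rw [← CStarRing.norm_star_mul_self]; simp
    nlinarith [norm_nonneg (1:A)]
  -- package dΓ n as a multilinear map
  have hDec : ∀ (n : ℕ) (inst : DecidableEq (Fin n)), inst = instDecidableEqFin n :=
    fun n inst => Subsingleton.elim _ _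
  let M : ∀ n : ℕ, MultilinearMap ℂ (fun _ : Fin n => H →L[ℂ] H) A := fun n =>
    { toFun := dΓ n
      map_update_add' := by
        intro inst T i x y
        have h1 := hadd n (Function.update T i y) i x
        rw [hDec n inst] at h1 ⊢
        simp only [Function.update_idem, Function.update_self] at h1
        exact h1
      map_update_smul' := by
        intro inst T i c x
        have h1 := hsmul n (Function.update T i x) i c
        rw [hDec n inst] at h1 ⊢
        simp only [Function.update_idem, Function.update_self] at h1
        exact h1 }
  have hM : ∀ (n : ℕ) (T : Fin n → (H →L[ℂ] H)), dΓ n T = M n T := fun n T => by rfl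
  -- norm bound for rank-one products
  have hterm : ∀ (n : ℕ) (f g : Fin n → H),
      ‖dΓ n (fun i => (innerSL ℂ (g i)).smulRight (f i))‖ ≤ ∏ i, (‖f i‖ * ‖g i‖) := by
    intro n f g
    rw [hrank1 n f g]
    rcases Nat.eq_zero_or_pos n with hn | hn
    · subst hn
      simpa using hone
    · have hne1 : (List.ofFn (fun i : Fin n => star (ann (f i.rev)))) ≠ [] := by
        simp [← List.length_pos_iff_ne_nil]
        omega
      have hne2 : (List.ofFn (fun i : Fin n => ann (g i))) ≠ [] := by
        simp [← List.length_pos_iff_ne_nil]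
        omega
      have hp1 : ‖(List.ofFn (fun i : Fin n => star (ann (f i.rev)))).prod‖ ≤ ∏ i, ‖f i‖ := by
        refine (List.norm_prod_le' hne1).trans ?_
        rw [List.map_ofFn, List.prod_ofFn]
        have : ∀ i : Fin n, (norm ∘ fun i : Fin n => star (ann (f i.rev))) i = ‖f i.rev‖ := by
          intro i; simp [norm_star, hnorm]
        rw [Finset.prod_congr rfl (fun i _ => this i)]
        rw [Fintype.prod_bijective Fin.rev Fin.rev_bijective
          (fun i => ‖f i.rev‖) (fun i => ‖f i‖) (fun i => rfl)]
      have hp2 : ‖(List.ofFn (fun i : Fin n => ann (g i))).prod‖ ≤ ∏ i, ‖g i‖ := by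
        refine (List.norm_prod_le' hne2).trans ?_
        rw [List.map_ofFn, List.prod_ofFn]
        refine le_of_eq (Finset.prod_congr rfl fun i _ => ?_)
        simp [hnorm]
      calc ‖(List.ofFn (fun i : Fin n => star (ann (f i.rev)))).prod *
            (List.ofFn (fun i : Fin n => ann (g i))).prod‖
          ≤ ‖(List.ofFn (fun i : Fin n => star (ann (f i.rev)))).prod‖ *
            ‖(List.ofFn (fun i : Fin n => ann (g i))).prod‖ := norm_mul_le _ _
        _ ≤ (∏ i, ‖f i‖) * (∏ i, ‖g i‖) := by
            refine mul_le_mul hp1 hp2 (norm_nonneg _) ?_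
            exact Finset.prod_nonneg fun i _ => norm_nonneg _
        _ = ∏ i, (‖f i‖ * ‖g i‖) := (Finset.prod_mul_distrib).symm
  -- Part 2
  have key2 : ∀ (n : ℕ) (T : Fin n → (H →L[ℂ] H)),
      (∀ i, FiniteDimensional ℂ ↥(LinearMap.range ((T i : H →L[ℂ] H) : H →ₗ[ℂ] H))) →
        ‖dΓ n T‖ ≤ ∏ i, traceNorm (T i) := by
    intro n T hT
    choose m s u v hu hv hs hdec hle using fun i => svd_full (T i) (hT i)
    have hTi : ∀ i, T i = ∑ j : Fin (m i),
        ((s i j : ℂ) • ((innerSL ℂ (v i j)).smulRight (u i j))) := by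
      intro i
      ext x
      rw [hdec i x]
      simp
    have hMT : dΓ n T = ∑ κ : (i : Fin n) → Fin (m i),
        (∏ i, (s i (κ i) : ℂ)) •
          dΓ n (fun i => (innerSL ℂ (v i (κ i))).smulRight (u i (κ i))) := by
      calc dΓ n T
          = M n (fun i => ∑ j : Fin (m i),
              (s i j : ℂ) • ((innerSL ℂ (v i j)).smulRight (u i j))) := by
            rw [hM n T]; congr 1; funext i; exact hTi i
        _ = ∑ κ : (i : Fin n) → Fin (m i), M n (fun i =>
              (s i (κ i) : ℂ) • ((innerSL ℂ (v i (κ i))).smulRight (u i (κ i)))) :=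
            (M n).map_sum _
        _ = ∑ κ : (i : Fin n) → Fin (m i), (∏ i, (s i (κ i) : ℂ)) •
              dΓ n (fun i => (innerSL ℂ (v i (κ i))).smulRight (u i (κ i))) := by
            refine Finset.sum_congr rfl fun κ _ => ?_
            rw [(M n).map_smul_univ]
            rfl
    have htermbound : ∀ κ : (i : Fin n) → Fin (m i),
        ‖(∏ i, (s i (κ i) : ℂ)) •
          dΓ n (fun i => (innerSL ℂ (v i (κ i))).smulRight (u i (κ i)))‖ ≤
          ∏ i, s i (κ i) := by
      intro κ
      rw [norm_smul]
      have h1 : ‖∏ i, (s i (κ i) : ℂ)‖ = ∏ i, s i (κ i) := by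
        rw [show (∏ i, (s i (κ i) : ℂ)) = ((∏ i, s i (κ i) : ℝ) : ℂ) by push_cast; rfl,
          Complex.norm_real,
          Real.norm_of_nonneg (Finset.prod_nonneg fun i _ => (hs i (κ i)).le)]
      rw [h1]
      have h2 := hterm n (fun i => u i (κ i)) (fun i => v i (κ i))
      have h3 : ∏ i, (‖u i (κ i)‖ * ‖v i (κ i)‖) = 1 := by
        refine Finset.prod_eq_one fun i _ => ?_
        rw [(hu i).1 (κ i), (hv i).1 (κ i)]
        norm_num
      calc (∏ i, s i (κ i)) *
            ‖dΓ n (fun i => (innerSL ℂ (v i (κ i))).smulRight (u i (κ i)))‖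
          ≤ (∏ i, s i (κ i)) * 1 := by
            refine mul_le_mul_of_nonneg_left ?_
              (Finset.prod_nonneg fun i _ => (hs i (κ i)).le)
            exact h2.trans (le_of_eq h3)
        _ = ∏ i, s i (κ i) := mul_one _
    calc ‖dΓ n T‖
        ≤ ∑ κ : (i : Fin n) → Fin (m i), ‖(∏ i, (s i (κ i) : ℂ)) •
            dΓ n (fun i => (innerSL ℂ (v i (κ i))).smulRight (u i (κ i)))‖ := by
          rw [hMT]; exact norm_sum_le _ _
      _ ≤ ∑ κ : (i : Fin n) → Fin (m i), ∏ i, s i (κ i) :=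
          Finset.sum_le_sum fun κ _ => htermbound κ
      _ = ∏ i, ∑ j : Fin (m i), s i j := by
          rw [Finset.prod_univ_sum (fun i => Finset.univ) (fun i j => s i j)]
          rw [Fintype.piFinset_univ]
      _ ≤ ∏ i, traceNorm (T i) := by
          refine Finset.prod_le_prod
            (fun i _ => Finset.sum_nonneg fun j _ => (hs i j).le) (fun i _ => ?_)
          exact (traceNorm_bounds (T i) (hu i) (hv i) (fun j => (hs i j).le) (hdec i)).1
  -- Part 1
  have key1 : ∀ n : ℕ, r < n → dΓ n (fun _ => V - 1) = 0 := by
    intro n hn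
    obtain ⟨m, s, u, v, hu, hv, hs, hdec, hle⟩ := svd_full (V - 1) hfin
    have hmn : m < n := lt_of_le_of_lt (hle.trans_eq hr) hn
    have hTi : (V - 1 : H →L[ℂ] H) = ∑ j : Fin m,
        ((s j : ℂ) • ((innerSL ℂ (v j)).smulRight (u j))) := by
      ext x
      rw [hdec x]
      simp
    calc dΓ n (fun _ => V - 1)
        = M n (fun _ : Fin n => ∑ j : Fin m,
            (s j : ℂ) • ((innerSL ℂ (v j)).smulRight (u j))) := by
          rw [hM]; congr 1; funext i; exact hTi
      _ = ∑ κ : Fin n → Fin m, M n (fun i =>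
            (s (κ i) : ℂ) • ((innerSL ℂ (v (κ i))).smulRight (u (κ i)))) :=
          (M n).map_sum _
      _ = 0 := by
          refine Finset.sum_eq_zero fun κ _ => ?_
          rw [(M n).map_smul_univ]
          obtain ⟨i1, i2, hne, heq⟩ := Fintype.exists_ne_map_eq_of_card_lt κ (by simpa using hmn)
          have hzero : (List.ofFn (fun i : Fin n => star (ann (u (κ i.rev))))).prod = 0 := by
            refine ofFn_prod_eq_zero _ (fun i j => hstaranti _ _)
              (i := i1.rev) (j := i2.rev) ?_ ?_
            · simpa [Fin.rev_inj] using hne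
            · simp [Fin.rev_rev, heq]
          have : dΓ n (fun i => (innerSL ℂ (v (κ i))).smulRight (u (κ i))) = 0 := by
            rw [hrank1 n (fun i => u (κ i)) (fun i => v (κ i)), hzero, zero_mul]
          rw [show (M n) (fun i => ((innerSL ℂ (v (κ i))).smulRight (u (κ i)))) =
            dΓ n (fun i => (innerSL ℂ (v (κ i))).smulRight (u (κ i))) from rfl]
          rw [this, smul_zero]
  -- Part 3
  have htn : 0 ≤ traceNorm (V - 1 : H →L[ℂ] H) := by
    obtain ⟨m, s, u, v, hu, hv, hs, hdec, hle⟩ := svd_full (V - 1) hfin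
    exact (traceNorm_bounds (V - 1) hu hv (fun j => (hs j).le) hdec).2
  have hbnd : ∀ n : ℕ, ‖dΓ n (fun _ : Fin n => V - 1)‖ ≤ traceNorm (V - 1 : H →L[ℂ] H) ^ n := by
    intro n
    have := key2 n (fun _ => V - 1) (fun _ => hfin)
    simpa [Finset.prod_const, Finset.card_univ] using this
  refine ⟨key1, key2, ?_⟩
  have hsumb : ‖∑ n ∈ Finset.Icc 1 r, ((Nat.factorial n : ℂ)⁻¹) • dΓ n (fun _ => V - 1)‖ ≤
      ∑ n ∈ Finset.Icc 1 r, traceNorm (V - 1 : H →L[ℂ] H) ^ n / (Nat.factorial n : ℝ) := by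
    refine (norm_sum_le _ _).trans (Finset.sum_le_sum fun n _ => ?_)
    rw [norm_smul, norm_inv, Complex.norm_natCast]
    rw [div_eq_inv_mul]
    refine mul_le_mul_of_nonneg_left (hbnd n) ?_
    positivity
  have hins : Finset.range (r + 1) = insert 0 (Finset.Icc 1 r) := by
    ext x
    simp [Nat.lt_succ_iff]
    omega
  have hexp := Real.sum_le_exp_of_nonneg htn (r + 1)
  rw [hins, Finset.sum_insert (by simp)] at hexp
  simp only [pow_zero, Nat.factorial_zero, Nat.cast_one, div_one] at hexp
  calc ‖(1 : A) + ∑ n ∈ Finset.Icc 1 r, ((Nat.factorial n : ℂ)⁻¹) • dΓ n (fun _ => V - 1)‖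
      ≤ ‖(1 : A)‖ + ‖∑ n ∈ Finset.Icc 1 r, ((Nat.factorial n : ℂ)⁻¹) • dΓ n (fun _ => V - 1)‖ :=
        norm_add_le _ _
    _ ≤ 1 + ∑ n ∈ Finset.Icc 1 r, traceNorm (V - 1 : H →L[ℂ] H) ^ n / (Nat.factorial n : ℝ) :=
        add_le_add hone hsumb
    _ ≤ Real.exp (traceNorm (V - 1 : H →L[ℂ] H)) := hexp
end
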